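/- Let S be a complete lattice. The operation on S ⊗ S^op determined on generators by (x ⊗ y')·(u ⊗ v') = 0 if u ≤ y, and = x ⊗ v' otherwise, extends to a well-defined associative multiplication distributing over arbitrary joins, making S ⊗ S^op a quantale C(S). -/

import Mathlib

/-- A quantale: a complete lattice with an associative multiplication
distributing over arbitrary joins in both variables. -/
class Quantale' (α : Type*) extends CompleteLattice α, Mul α where
  mul_assoc : ∀ a b c : α, a * b * c = a * (b * c)
  mul_sSup : ∀ (a : α) (s : Set α), a * sSup s = ⨆ b ∈ s, a * b
  sSup_mul : ∀ (s : Set α) (a : α), sSup s * a = ⨆ b ∈ s, b * a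

/-- A bimorphism of complete lattices: a map preserving arbitrary joins in each
variable separately. -/
def IsBimorphism {S T U : Type*} [CompleteLattice S] [CompleteLattice T]
    [CompleteLattice U] (f : S → T → U) : Prop :=
  (∀ (A : Set S) (y : T), f (sSup A) y = ⨆ x ∈ A, f x y) ∧
  (∀ (x : S) (B : Set T), f x (sSup B) = ⨆ y ∈ B, f x y)

/-- `(P, gen)` is a presentation of the tensor product `S ⊗ T` of sup-lattices:
`gen` is the universal bimorphism. -/
structure IsTensor (S T P : Type u) [CompleteLattice S] [CompleteLattice T]
    [CompleteLattice P] (gen : S → T → P) : Prop where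
  bimorph : IsBimorphism gen
  universal : ∀ (U : Type u) [CompleteLattice U] (f : S → T → U), IsBimorphism f →
      ∃! g : sSupHom P U, ∀ x y, g (gen x y) = f x y

/-- Pointwise supremum of a family of `sSupHom`s is a `sSupHom`. -/
def iSupHom {ι : Sort v} {P U : Type*} [CompleteLattice P] [CompleteLattice U]
    (f : ι → sSupHom P U) : sSupHom P U where
  toFun a := ⨆ i, f i a
  map_sSup' s := by
    rw [sSup_image]
    calc ⨆ i, f i (sSup s) = ⨆ i, ⨆ a ∈ s, f i a := by
          refine iSup_congr fun i => ?_
          rw [map_sSup, sSup_image]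
      _ = ⨆ a ∈ s, ⨆ i, f i a := by
          rw [iSup_comm]
          exact iSup_congr fun a => iSup_comm

@[simp] lemma iSupHom_apply {ι : Sort v} {P U : Type*} [CompleteLattice P] [CompleteLattice U]
    (f : ι → sSupHom P U) (a : P) : iSupHom f a = ⨆ i, f i a := rfl

/-- The constant-bottom `sSupHom`. -/
def botHom (P U : Type*) [CompleteLattice P] [CompleteLattice U] : sSupHom P U where
  toFun _ := ⊥
  map_sSup' s := by rw [sSup_image]; simp

@[simp] lemma botHom_apply {P U : Type*} [CompleteLattice P] [CompleteLattice U] (a : P) :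
    botHom P U a = ⊥ := rfl

section Aux

variable {S P : Type u} [CompleteLattice S] [CompleteLattice P]
    {gen : S → Sᵒᵈ → P} (ht : IsTensor S Sᵒᵈ P gen)

include ht

/-- Composing a sSupHom with the universal bimorphism yields a bimorphism. -/
lemma comp_bimorph (g : sSupHom P P) : IsBimorphism (fun x y => g (gen x y)) := by
  constructor
  · intro A y
    dsimp only
    rw [ht.bimorph.1, iSup_subtype', iSup_subtype', map_iSup]
  · intro x B
    dsimp only
    rw [ht.bimorph.2, iSup_subtype', iSup_subtype', map_iSup]

/-- Two sSupHoms out of the tensor product agreeing on generators are equal. -/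
lemma hom_ext {g₁ g₂ : sSupHom P P} (h : ∀ x y, g₁ (gen x y) = g₂ (gen x y)) :
    g₁ = g₂ := by
  obtain ⟨g, -, hu⟩ := ht.universal P (fun x y => g₁ (gen x y)) (comp_bimorph ht g₁)
  rw [hu g₁ (fun _ _ => rfl), hu g₂ (fun x y => (h x y).symm)]

open Classical in
/-- The generator bimorphism for fixed `x`, `y'`. -/
lemma gen_bimorph (x : S) (y' : Sᵒᵈ) :
    IsBimorphism (fun (u : S) (v' : Sᵒᵈ) =>
      if u ≤ OrderDual.ofDual y' then ⊥ else gen x v') := by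
  constructor
  · intro A v'
    dsimp only
    by_cases h : sSup A ≤ OrderDual.ofDual y'
    · rw [if_pos h]
      refine le_antisymm bot_le (iSup_le fun u => iSup_le fun hu => ?_)
      rw [if_pos ((le_sSup hu).trans h)]
    · rw [if_neg h]
      obtain ⟨u, hu, hnu⟩ : ∃ u ∈ A, ¬ u ≤ OrderDual.ofDual y' := by
        by_contra hc
        push_neg at hc
        exact h (sSup_le hc)
      apply le_antisymm
      · refine le_trans ?_ (le_iSup_of_le u (le_iSup_of_le hu le_rfl))
        rw [if_neg hnu]
      · refine iSup_le fun w => iSup_le fun hw => ?_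
        by_cases hw2 : w ≤ OrderDual.ofDual y' <;> simp [hw2]
  · intro u B
    dsimp only
    by_cases h : u ≤ OrderDual.ofDual y'
    · simp only [if_pos h]
      exact le_antisymm bot_le (iSup_le fun v' => iSup_le fun _ => le_rfl)
    · simp only [if_neg h]
      exact ht.bimorph.2 x B

open Classical in
private noncomputable def G (x : S) (y' : Sᵒᵈ) : sSupHom P P :=
  (ht.universal P _ (gen_bimorph ht x y')).exists.choose

open Classical in
lemma G_gen (x : S) (y' : Sᵒᵈ) (u : S) (v' : Sᵒᵈ) :
    G ht x y' (gen u v') = if u ≤ OrderDual.ofDual y' then ⊥ else gen x v' :=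
  (ht.universal P _ (gen_bimorph ht x y')).exists.choose_spec u v'

open Classical in
/-- For each `b`, `fun x y' => G x y' b` is a bimorphism. -/
lemma Gb_bimorph (b : P) : IsBimorphism (fun (x : S) (y' : Sᵒᵈ) => G ht x y' b) := by
  constructor
  · intro A y'
    dsimp only
    have : G ht (sSup A) y' = iSupHom (fun x : A => G ht x y') := by
      apply hom_ext ht
      intro u v'
      rw [G_gen, iSupHom_apply]
      simp only [G_gen]
      by_cases h : u ≤ OrderDual.ofDual y'
      · simp [h]
      · simp only [if_neg h]
        rw [ht.bimorph.1 A v', iSup_subtype']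
    rw [this, iSupHom_apply, iSup_subtype']
  · intro x B
    dsimp only
    have : G ht x (sSup B) = iSupHom (fun y' : B => G ht x y') := by
      apply hom_ext ht
      intro u v'
      rw [G_gen, iSupHom_apply]
      simp only [G_gen]
      by_cases h : u ≤ OrderDual.ofDual (sSup B)
      · -- sSup B in Sᵒᵈ is sInf of B in S; u ≤ ofDual (sSup B) iff ∀ y' ∈ B, u ≤ ofDual y'
        have hall : ∀ y' : B, u ≤ OrderDual.ofDual (y' : Sᵒᵈ) := by
          intro ⟨y', hy'⟩
          exact h.trans (OrderDual.ofDual_le_ofDual.mpr (le_sSup hy') : _)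
        simp only [if_pos h]
        refine le_antisymm bot_le (iSup_le fun i => ?_)
        rw [if_pos (hall i)]
      · simp only [if_neg h]
        obtain ⟨y', hy', hny'⟩ : ∃ y' ∈ B, ¬ u ≤ OrderDual.ofDual y' := by
          by_contra hc
          push_neg at hc
          refine h ?_
          have : sSup B ≤ OrderDual.toDual u := sSup_le fun y' hy' => hc y' hy'
          exact this
        apply le_antisymm
        · refine le_trans ?_ (le_iSup_of_le ⟨y', hy'⟩ le_rfl)
          rw [if_neg hny']
        · refine iSup_le fun w => ?_
          by_cases hw2 : u ≤ OrderDual.ofDual (w : Sᵒᵈ) <;> simp [hw2]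
    rw [this, iSupHom_apply, iSup_subtype']

private noncomputable def M (b : P) : sSupHom P P :=
  (ht.universal P _ (Gb_bimorph ht b)).exists.choose

lemma M_gen (b : P) (x : S) (y' : Sᵒᵈ) : M ht b (gen x y') = G ht x y' b :=
  (ht.universal P _ (Gb_bimorph ht b)).exists.choose_spec x y'

open Classical in
lemma G_comp_G (x u : S) (y' v' : Sᵒᵈ) :
    (G ht x y').comp (G ht u v') =
      if u ≤ OrderDual.ofDual y' then botHom P P else (G ht x v') := by
  apply hom_ext ht
  intro p q'
  by_cases h2 : u ≤ OrderDual.ofDual y'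
  · rw [if_pos h2]
    simp only [sSupHom.comp_apply, G_gen, botHom_apply]
    by_cases h1 : p ≤ OrderDual.ofDual v' <;> simp [h1, h2, map_bot, G_gen ht]
  · rw [if_neg h2]
    simp only [sSupHom.comp_apply, G_gen]
    by_cases h1 : p ≤ OrderDual.ofDual v' <;> simp [h1, h2, map_bot, G_gen ht]

open Classical in
lemma M_comm_G (c : P) (x : S) (y' : Sᵒᵈ) :
    (M ht c).comp (G ht x y') = (G ht x y').comp (M ht c) := by
  apply hom_ext ht
  intro u v'
  simp only [sSupHom.comp_apply, G_gen, M_gen]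
  rw [show G ht x y' (G ht u v' c) = ((G ht x y').comp (G ht u v')) c from rfl, G_comp_G ht]
  by_cases h : u ≤ OrderDual.ofDual y'
  · rw [if_pos h, if_pos h]
    simp [map_bot]
  · rw [if_neg h, if_neg h]
    exact M_gen ht c x v'

end Aux

open Classical in
/-- The generator formula `(x ⊗ y')·(u ⊗ v') = 0` if `u ≤ y`, else `x ⊗ v'`,
extends to a well-defined associative join-distributing multiplication on
`S ⊗ S^op`, making it a quantale `C(S)`. -/
theorem stmt11 {S P : Type u} [CompleteLattice S] [CompleteLattice P]
    (gen : S → Sᵒᵈ → P) (ht : IsTensor S Sᵒᵈ P gen) :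
    ∃ m : P → P → P,
      (∀ a b c : P, m (m a b) c = m a (m b c)) ∧
      (∀ (a : P) (s : Set P), m a (sSup s) = ⨆ b ∈ s, m a b) ∧
      (∀ (s : Set P) (a : P), m (sSup s) a = ⨆ b ∈ s, m b a) ∧
      (∀ x y u v : S,
        m (gen x (OrderDual.toDual y)) (gen u (OrderDual.toDual v)) =
          if u ≤ y then ⊥ else gen x (OrderDual.toDual v)) := by
  refine ⟨fun a b => M ht b a, ?_, ?_, ?_, ?_⟩
  · -- associativity
    intro a b c
    have key : (M ht c).comp (M ht b) = M ht (M ht c b) := by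
      apply hom_ext ht
      intro x y'
      simp only [sSupHom.comp_apply, M_gen]
      rw [show M ht c (G ht x y' b) = ((M ht c).comp (G ht x y')) b from rfl,
        M_comm_G ht]
      rfl
    calc M ht c (M ht b a) = ((M ht c).comp (M ht b)) a := rfl
      _ = M ht (M ht c b) a := by rw [key]
  · -- mul_sSup
    intro a s
    dsimp only
    have : M ht (sSup s) = iSupHom (fun b : s => M ht b) := by
      apply hom_ext ht
      intro x y'
      rw [M_gen, iSupHom_apply]
      simp only [M_gen]
      rw [map_sSup, sSup_image, iSup_subtype']
    rw [this, iSupHom_apply, iSup_subtype']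
  · -- sSup_mul
    intro s a
    dsimp only
    rw [map_sSup, sSup_image]
  · -- generators
    intro x y u v
    dsimp only
    rw [M_gen, G_gen]
    rfl
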